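/- Let H : ℝ² → ℝ and ρ : ℝ² → ℝ be C¹ with ρ(q,p) > 0 for all (q,p), and define the extended phase space Hamiltonian K(q,p,w,π) = (H(q,p) + π)/ρ(q,p) on ℝ⁴. Suppose (q,p,w,π) : I → ℝ⁴ is a differentiable curve on an interval I containing 0 that satisfies the canonical Hamilton equations of K for the conjugate pairs (q,p) and (w,π): q′ = ∂K/∂p, p′ = −∂K/∂q, w′ = ∂K/∂π, π′ = −∂K/∂w. Then: (i) π is constant along the curve; (ii) w′(ζ) = 1/ρ(q(ζ),p(ζ)) for all ζ ∈ I (so the prescribed time-step condition ρ dt = dζ is satisfied with t = w); and (iii) if H(q(0),p(0)) + π(0) = 0, then H(q(ζ),p(ζ)) + π(ζ) = 0 for all ζ ∈ I. -/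

import Mathlib

open Set


private lemma gronwall_zero_aux (b : ℝ) (E c : ℝ → ℝ)
    (hE : ∀ t ∈ Icc 0 b, HasDerivAt E (c t * E t) t)
    (hc : ContinuousOn c (Icc 0 b)) (h0 : E 0 = 0) :
    ∀ t ∈ Icc 0 b, E t = 0 := by
  obtain ⟨C, hC⟩ := (isCompact_Icc (a := (0:ℝ)) (b := b)).exists_bound_of_continuousOn hc
  have hcont : ContinuousOn E (Icc 0 b) := fun t ht =>
    (hE t ht).continuousAt.continuousWithinAt
  have key := norm_le_gronwallBound_of_norm_deriv_right_le (f := E)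
    (f' := fun t => c t * E t) (δ := 0) (K := C) (ε := 0) (a := 0) (b := b) hcont
    (fun t ht => (hE t (Ico_subset_Icc_self ht)).hasDerivWithinAt)
    (by simp [h0])
    (fun t ht => by
      have h1 := hC t (Ico_subset_Icc_self ht)
      have := norm_nonneg (E t)
      calc ‖c t * E t‖ = ‖c t‖ * ‖E t‖ := norm_mul _ _
        _ ≤ C * ‖E t‖ + 0 := by nlinarith)
  intro t ht
  have h2 := key t ht
  rw [gronwallBound_ε0] at h2
  simp at h2
  simpa using h2

private lemma ode_zero (I : Set ℝ) (hI : Convex ℝ I) (h0I : (0:ℝ) ∈ I)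
    (E c : ℝ → ℝ)
    (hE : ∀ ζ ∈ I, HasDerivAt E (c ζ * E ζ) ζ)
    (hc : ContinuousOn c I) (h0 : E 0 = 0) :
    ∀ ζ ∈ I, E ζ = 0 := by
  have hoc := hI.ordConnected
  intro ζ hζ
  rcases le_total 0 ζ with h | h
  · have hsub : Icc 0 ζ ⊆ I := hoc.out h0I hζ
    exact gronwall_zero_aux ζ E c (fun t ht => hE t (hsub ht)) (hc.mono hsub) h0 ζ
      ⟨h, le_rfl⟩
  · have hsub : Icc ζ 0 ⊆ I := hoc.out hζ h0I
    have hmaps : MapsTo (fun t : ℝ => -t) (Icc 0 (-ζ)) (Icc ζ 0) := fun t ht =>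
      ⟨by simpa using neg_le_neg ht.2, by simpa using ht.1⟩
    have key := gronwall_zero_aux (-ζ) (fun t => E (-t)) (fun t => -c (-t))
      (fun t ht => by
        have h1 := (hE (-t) (hsub (hmaps ht))).comp t (hasDerivAt_neg t)
        have h2 : HasDerivAt (fun t : ℝ => E (-t)) (c (-t) * E (-t) * (-1)) t := h1
        convert h2 using 1; ring)
      (((hc.mono hsub).comp (continuous_neg.continuousOn) hmaps).neg)
      (by simpa using h0)
    have := key (-ζ) ⟨by linarith, le_rfl⟩
    simpa using this

private lemma hasDerivAt_fst_section (g : ℝ × ℝ → ℝ) (hg : ContDiff ℝ 1 g) (a b : ℝ) :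
    HasDerivAt (fun x => g (x, b)) (fderiv ℝ g (a, b) (1, 0)) a := by
  have h1 : HasDerivAt (fun x : ℝ => (x, b)) ((1:ℝ), (0:ℝ)) a :=
    (hasDerivAt_id a).prodMk (hasDerivAt_const a b)
  exact ((hg.differentiable one_ne_zero (a, b)).hasFDerivAt).comp_hasDerivAt a h1

private lemma hasDerivAt_snd_section (g : ℝ × ℝ → ℝ) (hg : ContDiff ℝ 1 g) (a b : ℝ) :
    HasDerivAt (fun y => g (a, y)) (fderiv ℝ g (a, b) (0, 1)) b := by
  have h1 : HasDerivAt (fun y : ℝ => (a, y)) ((0:ℝ), (1:ℝ)) b :=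
    (hasDerivAt_const b a).prodMk (hasDerivAt_id b)
  exact ((hg.differentiable one_ne_zero (a, b)).hasFDerivAt).comp_hasDerivAt b h1

private lemma clm_apply_pair (L : ℝ × ℝ →L[ℝ] ℝ) (x y : ℝ) :
    L (x, y) = x * L (1, 0) + y * L (0, 1) := by
  have h : (x, y) = x • ((1:ℝ), (0:ℝ)) + y • ((0:ℝ), (1:ℝ)) := by
    simp [Prod.ext_iff]
  rw [h, map_add, map_smul, map_smul, smul_eq_mul, smul_eq_mul]



theorem extended_phase_space_hamiltonian_properties
    (H ρ : ℝ × ℝ → ℝ) (hH : ContDiff ℝ 1 H) (hρ : ContDiff ℝ 1 ρ)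
    (hρpos : ∀ z : ℝ × ℝ, 0 < ρ z)
    -- the extended phase space Hamiltonian K(q,p,w,π) = (H(q,p) + π)/ρ(q,p)
    (K : ℝ → ℝ → ℝ → ℝ → ℝ)
    (hK : ∀ q p w π : ℝ, K q p w π = (H (q, p) + π) / ρ (q, p))
    -- an interval I containing 0
    (I : Set ℝ) (hI : Convex ℝ I) (h0I : (0 : ℝ) ∈ I)
    -- a differentiable curve satisfying the canonical Hamilton equations of K
    (q p w π : ℝ → ℝ)
    (hq : ∀ ζ ∈ I, HasDerivAt q (deriv (fun p' => K (q ζ) p' (w ζ) (π ζ)) (p ζ)) ζ)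
    (hp : ∀ ζ ∈ I, HasDerivAt p (-deriv (fun q' => K q' (p ζ) (w ζ) (π ζ)) (q ζ)) ζ)
    (hw : ∀ ζ ∈ I, HasDerivAt w (deriv (fun π' => K (q ζ) (p ζ) (w ζ) π') (π ζ)) ζ)
    (hπ : ∀ ζ ∈ I, HasDerivAt π (-deriv (fun w' => K (q ζ) (p ζ) w' (π ζ)) (w ζ)) ζ) :
    -- (i) π is constant along the curve
    (∀ ζ ∈ I, π ζ = π 0)
    -- (ii) the prescribed time-step condition holds: w′ = 1/ρ(q,p)
    ∧ (∀ ζ ∈ I, HasDerivAt w (1 / ρ (q ζ, p ζ)) ζ)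
    -- (iii) H + π is conserved if it vanishes initially
    ∧ (H (q 0, p 0) + π 0 = 0 → ∀ ζ ∈ I, H (q ζ, p ζ) + π ζ = 0) := by
  have hρne : ∀ z : ℝ × ℝ, ρ z ≠ 0 := fun z => (hρpos z).ne'
  -- π' = 0
  have hπ0 : ∀ ζ ∈ I, HasDerivAt π 0 ζ := by
    intro ζ hζ
    have h1 : (fun w' => K (q ζ) (p ζ) w' (π ζ))
        = fun _ => (H (q ζ, p ζ) + π ζ) / ρ (q ζ, p ζ) := funext fun w' => hK _ _ _ _
    have h2 := hπ ζ hζ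
    rw [h1, deriv_const] at h2
    simpa using h2
  -- (i)
  have part1 : ∀ ζ ∈ I, π ζ = π 0 := by
    intro ζ hζ
    have hbound := hI.norm_image_sub_le_of_norm_hasDerivWithin_le
      (f := π) (f' := fun _ => (0:ℝ)) (C := 0)
      (fun x hx => (hπ0 x hx).hasDerivWithinAt) (fun x _ => by simp) h0I hζ
    have : ‖π ζ - π 0‖ ≤ 0 := by simpa using hbound
    have := norm_le_zero_iff.mp this
    linarith [sub_eq_zero.mp this]
  -- (ii)
  have part2 : ∀ ζ ∈ I, HasDerivAt w (1 / ρ (q ζ, p ζ)) ζ := by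
    intro ζ hζ
    have h1 : (fun π' => K (q ζ) (p ζ) (w ζ) π')
        = fun π' => (H (q ζ, p ζ) + π') / ρ (q ζ, p ζ) := funext fun π' => hK _ _ _ _
    have h2 : HasDerivAt (fun π' => (H (q ζ, p ζ) + π') / ρ (q ζ, p ζ))
        (1 / ρ (q ζ, p ζ)) (π ζ) := by
      simpa using ((hasDerivAt_id (π ζ)).const_add (H (q ζ, p ζ))).div_const (ρ (q ζ, p ζ))
    have h3 := hw ζ hζ
    rwa [h1, h2.deriv] at h3
  refine ⟨part1, part2, ?_⟩
  -- (iii)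
  intro hinit
  set c : ℝ → ℝ := fun t =>
    (fderiv ℝ H (q t, p t) (0, 1) * fderiv ℝ ρ (q t, p t) (1, 0)
      - fderiv ℝ H (q t, p t) (1, 0) * fderiv ℝ ρ (q t, p t) (0, 1)) / (ρ (q t, p t)) ^ 2
    with hc_def
  have hE : ∀ ζ ∈ I, HasDerivAt (fun t => H (q t, p t) + π t)
      (c ζ * (H (q ζ, p ζ) + π ζ)) ζ := by
    intro ζ hζ
    set z := (q ζ, p ζ) with hz
    have hR := hρne z
    -- q' computation
    have hfunp : (fun p' => K (q ζ) p' (w ζ) (π ζ))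
        = fun p' => (H (q ζ, p') + π ζ) / ρ (q ζ, p') := funext fun p' => hK _ _ _ _
    have hnump : HasDerivAt (fun p' => H (q ζ, p') + π ζ) (fderiv ℝ H z (0, 1)) (p ζ) :=
      (hasDerivAt_snd_section H hH (q ζ) (p ζ)).add_const _
    have hdenp := hasDerivAt_snd_section ρ hρ (q ζ) (p ζ)
    have hdivp : HasDerivAt (fun p' => (H (q ζ, p') + π ζ) / ρ (q ζ, p')) _ (p ζ) := hnump.div hdenp hR
    have hq' := hq ζ hζ
    rw [hfunp, hdivp.deriv] at hq'
    -- p' computation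
    have hfunq : (fun q' => K q' (p ζ) (w ζ) (π ζ))
        = fun q' => (H (q', p ζ) + π ζ) / ρ (q', p ζ) := funext fun q' => hK _ _ _ _
    have hnumq : HasDerivAt (fun q' => H (q', p ζ) + π ζ) (fderiv ℝ H z (1, 0)) (q ζ) :=
      (hasDerivAt_fst_section H hH (q ζ) (p ζ)).add_const _
    have hdenq := hasDerivAt_fst_section ρ hρ (q ζ) (p ζ)
    have hdivq : HasDerivAt (fun q' => (H (q', p ζ) + π ζ) / ρ (q', p ζ)) _ (q ζ) := hnumq.div hdenq hR
    have hp' := hp ζ hζ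
    rw [hfunq, hdivq.deriv] at hp'
    -- chain rule for H ∘ (q,p)
    have hcurve := hq'.prodMk hp'
    have hcomp := ((hH.differentiable one_ne_zero z).hasFDerivAt).comp_hasDerivAt ζ hcurve
    have htot : HasDerivAt (fun t => H (q t, p t) + π t) _ ζ := hcomp.add (hπ0 ζ hζ)
    convert htot using 1
    rw [clm_apply_pair]
    rw [hc_def]
    field_simp
    ring
  have hcont_qp : ContinuousOn (fun t => (q t, p t)) I := by
    intro t ht
    exact ((hq t ht).continuousAt.prodMk (hp t ht).continuousAt).continuousWithinAt
  have hfH : Continuous (fderiv ℝ H) := hH.continuous_fderiv one_ne_zero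
  have hfρ : Continuous (fderiv ℝ ρ) := hρ.continuous_fderiv one_ne_zero
  have happly : ∀ v : ℝ × ℝ, Continuous fun L : (ℝ × ℝ) →L[ℝ] ℝ => L v := fun v =>
    (ContinuousLinearMap.apply ℝ ℝ v).continuous
  have hc_cont : ContinuousOn c I := by
    apply ContinuousOn.div
    · exact (((happly (0,1)).comp hfH).comp_continuousOn hcont_qp).mul
        (((happly (1,0)).comp hfρ).comp_continuousOn hcont_qp) |>.sub
        ((((happly (1,0)).comp hfH).comp_continuousOn hcont_qp).mul
        (((happly (0,1)).comp hfρ).comp_continuousOn hcont_qp))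
    · exact (((hρ.continuous).comp_continuousOn hcont_qp)).pow 2
    · intro t _
      exact pow_ne_zero 2 (hρne _)
  exact ode_zero I hI h0I (fun t => H (q t, p t) + π t) c hE hc_cont hinit
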